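/- arXiv:2006.12938 — 3 statements merged into one kernel-verified Lean document; each statement's English description precedes it below -/
import Mathlib

section
/- Let Z be a measurable space and let L : ℝ × ℝ → [0,∞) be measurable, symmetric (L(a,b) = L(b,a)) and satisfy the triangle inequality (L(a,c) ≤ L(a,b) + L(b,c) for all a, b, c). Let p_T be a probability measure on Z × ℝ, let f, f* : Z → ℝ be measurable, and let p_T^f be the self-labelled distribution associated with f. Then ε_{p_T}(f) ≤ ε_{p_T}(f*) + ε_{p_T^f}(f*), with all expected losses taken as integrals in [0,∞]. -/
open MeasureTheory ENNReal

/-- Expected loss of a predictor `h` with respect to a loss `L` and a joint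
distribution `p` on `Z × ℝ` (taken in `[0,∞]`). -/
noncomputable def expLoss {Z : Type*} [MeasurableSpace Z]
    (L : ℝ → ℝ → ℝ) (p : Measure (Z × ℝ)) (h : Z → ℝ) : ℝ≥0∞ :=
  ∫⁻ z, ENNReal.ofReal (L z.2 (h z.1)) ∂p

/-- Self-labelled distribution: the pushforward of the first marginal of `p`
under `x ↦ (x, f x)`. -/
noncomputable def selfLabel {Z : Type*} [MeasurableSpace Z]
    (p : Measure (Z × ℝ)) (f : Z → ℝ) : Measure (Z × ℝ) :=
  (p.map Prod.fst).map fun x => (x, f x)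

/-- For a symmetric loss satisfying the triangle inequality,
`ε_{p_T}(f) ≤ ε_{p_T}(f*) + ε_{p_T^f}(f*)`. -/
theorem stmt6 {Z : Type*} [MeasurableSpace Z]
    (L : ℝ → ℝ → ℝ) (hLmeas : Measurable fun yy : ℝ × ℝ => L yy.1 yy.2)
    (hL0 : ∀ a b, 0 ≤ L a b)
    (hLsymm : ∀ a b, L a b = L b a)
    (hLtri : ∀ a b c, L a c ≤ L a b + L b c)
    (pT : Measure (Z × ℝ)) [IsProbabilityMeasure pT]
    (f fstar : Z → ℝ) (hf : Measurable f) (hfstar : Measurable fstar) :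
    expLoss L pT f ≤ expLoss L pT fstar + expLoss L (selfLabel pT f) fstar := by
  have hmeas2 : Measurable fun z : Z × ℝ => ENNReal.ofReal (L (f z.1) (fstar z.1)) := by
    exact (measurable_ofReal.comp (hLmeas.comp ((hf.comp measurable_fst).prodMk
      (hfstar.comp measurable_fst))))
  have hself : expLoss L (selfLabel pT f) fstar
      = ∫⁻ z, ENNReal.ofReal (L (f z.1) (fstar z.1)) ∂pT := by
    unfold expLoss selfLabel
    rw [lintegral_map (by
        exact measurable_ofReal.comp (hLmeas.comp (measurable_snd.prodMk
          (hfstar.comp measurable_fst)))) (show Measurable fun x : Z => (x, f x) from measurable_id.prodMk hf),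
      lintegral_map (by
        exact measurable_ofReal.comp (hLmeas.comp ((hf.prodMk hfstar)))) measurable_fst]
  rw [hself]
  rw [expLoss, expLoss, ← lintegral_add_left (by
    exact measurable_ofReal.comp (hLmeas.comp (measurable_snd.prodMk
      (hfstar.comp measurable_fst))))]
  refine lintegral_mono fun z => ?_
  rw [← ENNReal.ofReal_add (hL0 _ _) (hL0 _ _)]
  refine ENNReal.ofReal_le_ofReal ?_
  calc L z.2 (f z.1) ≤ L z.2 (fstar z.1) + L (fstar z.1) (f z.1) := hLtri _ _ _
    _ = L z.2 (fstar z.1) + L (f z.1) (fstar z.1) := by rw [hLsymm (fstar z.1)]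
end

section
/- Let (Z, d) be a measurable space equipped with a measurable pseudometric d, let k > 0, λ > 0, M ≥ 0, φ ∈ [0,1], and let L : ℝ × ℝ → [0,∞) be measurable, symmetric, k-Lipschitz in each argument (|L(y,a) − L(y,b)| ≤ k|a − b|), and satisfying the triangle inequality. Let p_S^α and p_T^f be probability measures on Z × ℝ (p_T^f the self-labelled distribution of a measurable f with respect to a target measure p_T on Z × ℝ), and let f* : Z → ℝ be measurable with |f*(x) − f*(x')| ≤ M for all x, x'. Let D be the ground cost D((x,y),(x',y')) = kλ·d(x,x') + L(y,y') on Z × ℝ, and suppose there exists a coupling π* of p_S^α and p_T^f attaining W_D(p_S^α, p_T^f) and such that π*{((x_α, y_α), (x_T, y_T)) : |f*(x_α) − f*(x_T)| > λ·d(x_α, x_T)} ≤ φ. Then |ε_{p_T^f}(f*) − ε_{p_S^α}(f*)| ≤ k·M·φ + W_D(p_S^α, p_T^f), provided the expected losses ε_{p_T^f}(f*) and ε_{p_S^α}(f*) are finite. -/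
open MeasureTheory ENNReal

/-- `π` is a coupling of `p` and `q`: a probability measure on the product
whose first marginal is `p` and whose second marginal is `q`. -/
def IsCoupling {V : Type*} [MeasurableSpace V]
    (π : Measure (V × V)) (p q : Measure V) : Prop :=
  IsProbabilityMeasure π ∧ π.map Prod.fst = p ∧ π.map Prod.snd = q

/-- Optimal transport cost for a nonnegative cost `c`: infimum over all
couplings of the integral of the cost (taken in `[0,∞]`). -/
noncomputable def otCost {V : Type*} [MeasurableSpace V]
    (c : V → V → ℝ) (p q : Measure V) : ℝ≥0∞ :=
  ⨅ (π : Measure (V × V)) (_ : IsCoupling π p q),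
    ∫⁻ w, ENNReal.ofReal (c w.1 w.2) ∂π

/-- The deviation between the errors of `f*` on `p_S^α` and on the
self-labelled target distribution `p_T^f` is controlled by `k·M·φ` plus the
optimal transport cost for the ground cost
`D((x,y),(x',y')) = kλ d(x,x') + L(y,y')`. -/
theorem stmt7 {Z : Type*} [MeasurableSpace Z]
    (d : Z → Z → ℝ) (hdmeas : Measurable fun w : Z × Z => d w.1 w.2)
    (hdrefl : ∀ x, d x x = 0) (hdsymm : ∀ x x', d x x' = d x' x)
    (hdtri : ∀ x y z, d x z ≤ d x y + d y z)
    (k lam M φ : ℝ) (hk : 0 < k) (hlam : 0 < lam) (hM : 0 ≤ M)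
    (hφ0 : 0 ≤ φ) (hφ1 : φ ≤ 1)
    (L : ℝ → ℝ → ℝ) (hLmeas : Measurable fun yy : ℝ × ℝ => L yy.1 yy.2)
    (hL0 : ∀ a b, 0 ≤ L a b)
    (hLsymm : ∀ a b, L a b = L b a)
    (hLtri : ∀ a b c, L a c ≤ L a b + L b c)
    (hLlip : ∀ y a b, |L y a - L y b| ≤ k * |a - b|)
    (pSα pT : Measure (Z × ℝ)) [IsProbabilityMeasure pSα] [IsProbabilityMeasure pT]
    (f : Z → ℝ) (hf : Measurable f)
    (fstar : Z → ℝ) (hfstar : Measurable fstar)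
    (hfstarM : ∀ x x', |fstar x - fstar x'| ≤ M)
    (πstar : Measure ((Z × ℝ) × (Z × ℝ)))
    (hπstar : IsCoupling πstar pSα (selfLabel pT f))
    (hopt : ∫⁻ w, ENNReal.ofReal (k * lam * d w.1.1 w.2.1 + L w.1.2 w.2.2) ∂πstar
      = otCost (fun w w' : Z × ℝ => k * lam * d w.1 w'.1 + L w.2 w'.2) pSα (selfLabel pT f))
    (hptl : πstar {w : (Z × ℝ) × (Z × ℝ) |
        lam * d w.1.1 w.2.1 < |fstar w.1.1 - fstar w.2.1|} ≤ ENNReal.ofReal φ)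
    (hfin1 : expLoss L (selfLabel pT f) fstar ≠ ⊤)
    (hfin2 : expLoss L pSα fstar ≠ ⊤) :
    max (expLoss L (selfLabel pT f) fstar - expLoss L pSα fstar)
        (expLoss L pSα fstar - expLoss L (selfLabel pT f) fstar)
      ≤ ENNReal.ofReal (k * M * φ)
        + otCost (fun w w' : Z × ℝ => k * lam * d w.1 w'.1 + L w.2 w'.2)
            pSα (selfLabel pT f) := by

  obtain ⟨hπprob, hfst, hsnd⟩ := hπstar
  -- nonnegativity of d
  have hd0 : ∀ x y, 0 ≤ d x y := by
    intro x y
    have h := hdtri x y x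
    rw [hdrefl x, hdsymm y x] at h
    linarith
  -- measurability helpers
  have hmeasB : Measurable fun z : Z × ℝ => ENNReal.ofReal (L z.2 (fstar z.1)) :=
    (hLmeas.comp (measurable_snd.prodMk (hfstar.comp measurable_fst))).ennreal_ofReal
  have hmeasBw : Measurable fun w : (Z × ℝ) × (Z × ℝ) =>
      ENNReal.ofReal (L w.1.2 (fstar w.1.1)) := hmeasB.comp measurable_fst
  have hmeasAw : Measurable fun w : (Z × ℝ) × (Z × ℝ) =>
      ENNReal.ofReal (L w.2.2 (fstar w.2.1)) := hmeasB.comp measurable_snd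
  have hmeasd : Measurable fun w : (Z × ℝ) × (Z × ℝ) => d w.1.1 w.2.1 :=
    hdmeas.comp ((measurable_fst.comp measurable_fst).prodMk
      (measurable_fst.comp measurable_snd))
  have hmeasL2 : Measurable fun w : (Z × ℝ) × (Z × ℝ) => L w.1.2 w.2.2 :=
    hLmeas.comp ((measurable_snd.comp measurable_fst).prodMk
      (measurable_snd.comp measurable_snd))
  have hmeasC : Measurable fun w : (Z × ℝ) × (Z × ℝ) =>
      ENNReal.ofReal (k * lam * d w.1.1 w.2.1 + L w.1.2 w.2.2) :=
    ((hmeasd.const_mul (k * lam)).add hmeasL2).ennreal_ofReal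
  set S : Set ((Z × ℝ) × (Z × ℝ)) :=
    {w | lam * d w.1.1 w.2.1 < |fstar w.1.1 - fstar w.2.1|} with hSdef
  have hS : MeasurableSet S := by
    apply measurableSet_lt
    · exact hmeasd.const_mul lam
    · exact ((hfstar.comp (measurable_fst.comp measurable_fst)).sub
        (hfstar.comp (measurable_fst.comp measurable_snd))).abs
  -- identify the two expected losses as integrals over πstar
  have hA : expLoss L (selfLabel pT f) fstar
      = ∫⁻ w, ENNReal.ofReal (L w.2.2 (fstar w.2.1)) ∂πstar := by
    rw [expLoss, ← hsnd, lintegral_map hmeasB measurable_snd]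
  have hB : expLoss L pSα fstar
      = ∫⁻ w, ENNReal.ofReal (L w.1.2 (fstar w.1.1)) ∂πstar := by
    rw [expLoss, ← hfst, lintegral_map hmeasB measurable_fst]
  -- pointwise real inequality
  have keyR : ∀ x x' : Z, ∀ y y' : ℝ,
      L y' (fstar x') ≤ L y (fstar x) + (k * lam * d x x' + L y y')
        + (if lam * d x x' < |fstar x - fstar x'| then k * M else 0) := by
    intro x x' y y'
    have h1 : L y' (fstar x') ≤ L y' y + L y (fstar x') := hLtri _ _ _
    have h2 : L y (fstar x') - L y (fstar x) ≤ k * |fstar x' - fstar x| := by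
      have h := hLlip y (fstar x') (fstar x)
      have := le_abs_self (L y (fstar x') - L y (fstar x))
      linarith
    have habs : |fstar x' - fstar x| = |fstar x - fstar x'| := abs_sub_comm _ _
    have h3 : k * |fstar x - fstar x'|
        ≤ k * lam * d x x' + (if lam * d x x' < |fstar x - fstar x'| then k * M else 0) := by
      split_ifs with h
      · have h4 : |fstar x - fstar x'| ≤ M := hfstarM x x'
        have h5 : 0 ≤ d x x' := hd0 x x'
        nlinarith [mul_le_mul_of_nonneg_left h4 hk.le,
          mul_nonneg (mul_nonneg hk.le hlam.le) h5]
      · push_neg at h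
        nlinarith
    have hsy : L y' y = L y y' := hLsymm _ _
    rw [habs] at h2
    linarith
  -- cost integral
  set W : ℝ≥0∞ := ∫⁻ w, ENNReal.ofReal (k * lam * d w.1.1 w.2.1 + L w.1.2 w.2.2) ∂πstar
    with hWdef
  have hind : ∫⁻ w, S.indicator (fun _ => ENNReal.ofReal (k * M)) w ∂πstar
      ≤ ENNReal.ofReal (k * M * φ) := by
    rw [lintegral_indicator_const hS]
    calc ENNReal.ofReal (k * M) * πstar S
        ≤ ENNReal.ofReal (k * M) * ENNReal.ofReal φ := mul_le_mul_right hptl _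
      _ = ENNReal.ofReal (k * M * φ) := by
          rw [← ENNReal.ofReal_mul (by positivity)]
  -- generic one-sided bound
  have main : ∀ g₁ g₂ : (Z × ℝ) × (Z × ℝ) → ℝ≥0∞,
      Measurable g₁ → Measurable g₂ →
      (∀ w, g₂ w ≤ g₁ w + ENNReal.ofReal (k * lam * d w.1.1 w.2.1 + L w.1.2 w.2.2)
        + S.indicator (fun _ => ENNReal.ofReal (k * M)) w) →
      ∫⁻ w, g₂ w ∂πstar ≤ ∫⁻ w, g₁ w ∂πstar + (ENNReal.ofReal (k * M * φ) + W) := by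
    intro g₁ g₂ hg₁ hg₂ hpt
    calc ∫⁻ w, g₂ w ∂πstar
        ≤ ∫⁻ w, (g₁ w + ENNReal.ofReal (k * lam * d w.1.1 w.2.1 + L w.1.2 w.2.2)
            + S.indicator (fun _ => ENNReal.ofReal (k * M)) w) ∂πstar :=
          lintegral_mono hpt
      _ = ∫⁻ w, g₁ w ∂πstar + W
            + ∫⁻ w, S.indicator (fun _ => ENNReal.ofReal (k * M)) w ∂πstar := by
          rw [lintegral_add_right _ (measurable_const.indicator hS),
            lintegral_add_left hg₁]
      _ ≤ ∫⁻ w, g₁ w ∂πstar + W + ENNReal.ofReal (k * M * φ) :=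
          add_le_add_right hind _
      _ = ∫⁻ w, g₁ w ∂πstar + (ENNReal.ofReal (k * M * φ) + W) := by ring
  -- pointwise ENNReal inequalities
  have hptAB : ∀ w : (Z × ℝ) × (Z × ℝ),
      ENNReal.ofReal (L w.2.2 (fstar w.2.1))
        ≤ ENNReal.ofReal (L w.1.2 (fstar w.1.1))
          + ENNReal.ofReal (k * lam * d w.1.1 w.2.1 + L w.1.2 w.2.2)
          + S.indicator (fun _ => ENNReal.ofReal (k * M)) w := by
    intro w
    have hkey := keyR w.1.1 w.2.1 w.1.2 w.2.2
    by_cases hw : w ∈ S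
    · rw [Set.indicator_of_mem hw]
      have hw' : lam * d w.1.1 w.2.1 < |fstar w.1.1 - fstar w.2.1| := hw
      rw [if_pos hw'] at hkey
      calc ENNReal.ofReal (L w.2.2 (fstar w.2.1))
          ≤ ENNReal.ofReal (L w.1.2 (fstar w.1.1)
              + (k * lam * d w.1.1 w.2.1 + L w.1.2 w.2.2) + k * M) :=
            ENNReal.ofReal_le_ofReal hkey
        _ ≤ _ := by
            rw [ENNReal.ofReal_add (add_nonneg (hL0 _ _)
                (add_nonneg (mul_nonneg (mul_nonneg hk.le hlam.le) (hd0 _ _)) (hL0 _ _)))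
                (by positivity),
              ENNReal.ofReal_add (hL0 _ _)
                (add_nonneg (mul_nonneg (mul_nonneg hk.le hlam.le) (hd0 _ _)) (hL0 _ _))]
    · rw [Set.indicator_of_notMem hw]
      have hw' : ¬ lam * d w.1.1 w.2.1 < |fstar w.1.1 - fstar w.2.1| := hw
      rw [if_neg hw', add_zero] at hkey
      calc ENNReal.ofReal (L w.2.2 (fstar w.2.1))
          ≤ ENNReal.ofReal (L w.1.2 (fstar w.1.1)
              + (k * lam * d w.1.1 w.2.1 + L w.1.2 w.2.2)) :=
            ENNReal.ofReal_le_ofReal hkey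
        _ ≤ _ := by
            rw [ENNReal.ofReal_add (hL0 _ _)
              (add_nonneg (mul_nonneg (mul_nonneg hk.le hlam.le) (hd0 _ _)) (hL0 _ _))]
            exact le_add_right le_rfl
  have hptBA : ∀ w : (Z × ℝ) × (Z × ℝ),
      ENNReal.ofReal (L w.1.2 (fstar w.1.1))
        ≤ ENNReal.ofReal (L w.2.2 (fstar w.2.1))
          + ENNReal.ofReal (k * lam * d w.1.1 w.2.1 + L w.1.2 w.2.2)
          + S.indicator (fun _ => ENNReal.ofReal (k * M)) w := by
    intro w
    have hkey := keyR w.2.1 w.1.1 w.2.2 w.1.2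
    rw [hdsymm w.2.1 w.1.1, hLsymm w.2.2 w.1.2, abs_sub_comm (fstar w.2.1)] at hkey
    by_cases hw : w ∈ S
    · rw [Set.indicator_of_mem hw]
      have hw' : lam * d w.1.1 w.2.1 < |fstar w.1.1 - fstar w.2.1| := hw
      rw [if_pos hw'] at hkey
      calc ENNReal.ofReal (L w.1.2 (fstar w.1.1))
          ≤ ENNReal.ofReal (L w.2.2 (fstar w.2.1)
              + (k * lam * d w.1.1 w.2.1 + L w.1.2 w.2.2) + k * M) :=
            ENNReal.ofReal_le_ofReal hkey
        _ ≤ _ := by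
            rw [ENNReal.ofReal_add (add_nonneg (hL0 _ _)
                (add_nonneg (mul_nonneg (mul_nonneg hk.le hlam.le) (hd0 _ _)) (hL0 _ _)))
                (by positivity),
              ENNReal.ofReal_add (hL0 _ _)
                (add_nonneg (mul_nonneg (mul_nonneg hk.le hlam.le) (hd0 _ _)) (hL0 _ _))]
    · rw [Set.indicator_of_notMem hw]
      have hw' : ¬ lam * d w.1.1 w.2.1 < |fstar w.1.1 - fstar w.2.1| := hw
      rw [if_neg hw', add_zero] at hkey
      calc ENNReal.ofReal (L w.1.2 (fstar w.1.1))
          ≤ ENNReal.ofReal (L w.2.2 (fstar w.2.1)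
              + (k * lam * d w.1.1 w.2.1 + L w.1.2 w.2.2)) :=
            ENNReal.ofReal_le_ofReal hkey
        _ ≤ _ := by
            rw [ENNReal.ofReal_add (hL0 _ _)
              (add_nonneg (mul_nonneg (mul_nonneg hk.le hlam.le) (hd0 _ _)) (hL0 _ _))]
            exact le_add_right le_rfl
  have h1 : expLoss L (selfLabel pT f) fstar
      ≤ expLoss L pSα fstar + (ENNReal.ofReal (k * M * φ) + W) := by
    rw [hA, hB]; exact main _ _ hmeasBw hmeasAw hptAB
  have h2 : expLoss L pSα fstar
      ≤ expLoss L (selfLabel pT f) fstar + (ENNReal.ofReal (k * M * φ) + W) := by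
    rw [hA, hB]; exact main _ _ hmeasAw hmeasBw hptBA
  rw [← hopt]
  apply max_le
  · rw [tsub_le_iff_right, add_comm (ENNReal.ofReal (k * M * φ) + W)] at *
    exact h1
  · rw [tsub_le_iff_right, add_comm (ENNReal.ofReal (k * M * φ) + W)] at *
    exact h2
end

section
/- (Generalization bound for MSDA-WJDOT, Lemma 2.) Let (Z, d) be a measurable space equipped with a measurable pseudometric d, let k > 0, λ > 0, M ≥ 0, φ ∈ [0,1], and let L : ℝ × ℝ → [0,∞) be measurable, symmetric, k-Lipschitz in each argument, and satisfying the triangle inequality. Let p_{S,1}, …, p_{S,J} and p_T be probability measures on Z × ℝ, α in the simplex, p_S^α = Σ_j α_j p_{S,j}, f : Z → ℝ measurable, and p_T^f the self-labelled distribution of f with respect to p_T. Let D be the ground cost D((x,y),(x',y')) = kλ·d(x,x') + L(y,y') on Z × ℝ. Suppose f* : Z → ℝ minimizes h ↦ ε_{p_S^α}(h) + ε_{p_T}(h) over a class H of measurable functions containing f*, that |f*(x) − f*(x')| ≤ M for all x, x', that all expected losses involved are finite, and that there exists a coupling π* of p_S^α and p_T^f attaining W_D(p_S^α, p_T^f)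 with π*{((x_α, y_α), (x_T, y_T)) : |f*(x_α) − f*(x_T)| > λ·d(x_α, x_T)} ≤ φ. Then ε_{p_T}(f) ≤ W_D(p_S^α, p_T^f) + Λ(p_S^α, p_T) + k·M·φ, where Λ(p_S^α, p_T) = ε_{p_S^α}(f*) + ε_{p_T}(f*). -/
open MeasureTheory ENNReal

/-- Generalization bound for MSDA-WJDOT (Lemma 2):
`ε_{p_T}(f) ≤ W_D(p_S^α, p_T^f) + Λ(p_S^α, p_T) + k·M·φ`. -/
theorem stmt8 {Z : Type*} [MeasurableSpace Z] {J : ℕ}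
    (d : Z → Z → ℝ) (hdmeas : Measurable fun w : Z × Z => d w.1 w.2)
    (hdrefl : ∀ x, d x x = 0) (hdsymm : ∀ x x', d x x' = d x' x)
    (hdtri : ∀ x y z, d x z ≤ d x y + d y z)
    (k lam M φ : ℝ) (hk : 0 < k) (hlam : 0 < lam) (hM : 0 ≤ M)
    (hφ0 : 0 ≤ φ) (hφ1 : φ ≤ 1)
    (L : ℝ → ℝ → ℝ) (hLmeas : Measurable fun yy : ℝ × ℝ => L yy.1 yy.2)
    (hL0 : ∀ a b, 0 ≤ L a b)
    (hLsymm : ∀ a b, L a b = L b a)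
    (hLtri : ∀ a b c, L a c ≤ L a b + L b c)
    (hLlip : ∀ y a b, |L y a - L y b| ≤ k * |a - b|)
    (pS : Fin J → Measure (Z × ℝ)) [∀ j, IsProbabilityMeasure (pS j)]
    (pT : Measure (Z × ℝ)) [IsProbabilityMeasure pT]
    (α : Fin J → ℝ≥0∞) (hα1 : ∀ j, α j ≤ 1) (hαsum : ∑ j, α j = 1)
    (pSα : Measure (Z × ℝ)) [IsProbabilityMeasure pSα]
    (hpSα : pSα = ∑ j, α j • pS j)
    (f : Z → ℝ) (hf : Measurable f)
    (H : Set (Z → ℝ)) (hHmeas : ∀ h ∈ H, Measurable h)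
    (fstar : Z → ℝ) (hfstarH : fstar ∈ H)
    (hmin : ∀ h ∈ H,
      expLoss L pSα fstar + expLoss L pT fstar ≤ expLoss L pSα h + expLoss L pT h)
    (hfstarM : ∀ x x', |fstar x - fstar x'| ≤ M)
    (hfin1 : expLoss L pSα fstar ≠ ⊤) (hfin2 : expLoss L pT fstar ≠ ⊤)
    (hfin3 : expLoss L (selfLabel pT f) fstar ≠ ⊤) (hfin4 : expLoss L pT f ≠ ⊤)
    (πstar : Measure ((Z × ℝ) × (Z × ℝ)))
    (hπstar : IsCoupling πstar pSα (selfLabel pT f))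
    (hopt : ∫⁻ w, ENNReal.ofReal (k * lam * d w.1.1 w.2.1 + L w.1.2 w.2.2) ∂πstar
      = otCost (fun w w' : Z × ℝ => k * lam * d w.1 w'.1 + L w.2 w'.2) pSα (selfLabel pT f))
    (hptl : πstar {w : (Z × ℝ) × (Z × ℝ) |
        lam * d w.1.1 w.2.1 < |fstar w.1.1 - fstar w.2.1|} ≤ ENNReal.ofReal φ) :
    expLoss L pT f
      ≤ otCost (fun w w' : Z × ℝ => k * lam * d w.1 w'.1 + L w.2 w'.2)
          pSα (selfLabel pT f)
        + (expLoss L pSα fstar + expLoss L pT fstar)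
        + ENNReal.ofReal (k * M * φ) := by
  obtain ⟨hπprob, hπ1, hπ2⟩ := hπstar
  have hfm : Measurable fstar := hHmeas fstar hfstarH
  -- measurability helpers
  have mF : Measurable fun z : Z × ℝ => ENNReal.ofReal (L z.2 (fstar z.1)) :=
    (hLmeas.comp (measurable_snd.prodMk (hfm.comp measurable_fst))).ennreal_ofReal
  have mG : Measurable fun x : Z => ENNReal.ofReal (L (f x) (fstar x)) :=
    (hLmeas.comp (hf.prodMk hfm)).ennreal_ofReal
  have m1 : Measurable fun w : (Z × ℝ) × (Z × ℝ) => ENNReal.ofReal (L w.1.2 w.2.2) :=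
    (hLmeas.comp (measurable_fst.snd.prodMk measurable_snd.snd)).ennreal_ofReal
  have m2 : Measurable fun w : (Z × ℝ) × (Z × ℝ) => ENNReal.ofReal (L w.1.2 (fstar w.1.1)) :=
    (hLmeas.comp (measurable_fst.snd.prodMk (hfm.comp measurable_fst.fst))).ennreal_ofReal
  have mdraw : Measurable fun w : (Z × ℝ) × (Z × ℝ) => d w.1.1 w.2.1 :=
    hdmeas.comp (measurable_fst.fst.prodMk measurable_snd.fst)
  have md : Measurable fun w : (Z × ℝ) × (Z × ℝ) => ENNReal.ofReal (k * lam * d w.1.1 w.2.1) :=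
    (mdraw.const_mul (k * lam)).ennreal_ofReal
  have mΔ : Measurable fun w : (Z × ℝ) × (Z × ℝ) => |fstar w.1.1 - fstar w.2.1| :=
    ((hfm.comp measurable_fst.fst).sub (hfm.comp measurable_snd.fst)).abs
  -- Step A: ε_{pT}(f) ≤ ε_{pT}(f*) + ∫ L(f x, f* x) dpT
  have stepA : expLoss L pT f
      ≤ expLoss L pT fstar + ∫⁻ z, ENNReal.ofReal (L (f z.1) (fstar z.1)) ∂pT := by
    rw [expLoss, expLoss, ← lintegral_add_left mF]
    refine lintegral_mono fun z => ?_
    rw [← ENNReal.ofReal_add (hL0 _ _) (hL0 _ _)]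
    refine ENNReal.ofReal_le_ofReal ?_
    calc L z.2 (f z.1) ≤ L z.2 (fstar z.1) + L (fstar z.1) (f z.1) := hLtri _ _ _
      _ = L z.2 (fstar z.1) + L (f z.1) (fstar z.1) := by rw [hLsymm (fstar z.1)]
  -- Step B: identify ∫ L(f x, f* x) dpT with ε_{p_T^f}(f*) and move to πstar
  have stepB : (∫⁻ z, ENNReal.ofReal (L (f z.1) (fstar z.1)) ∂pT)
      = ∫⁻ w, ENNReal.ofReal (L w.2.2 (fstar w.2.1)) ∂πstar := by
    have h1 : expLoss L (selfLabel pT f) fstar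
        = ∫⁻ z, ENNReal.ofReal (L (f z.1) (fstar z.1)) ∂pT := by
      rw [expLoss, selfLabel, lintegral_map mF (measurable_id'.prodMk hf),
        lintegral_map mG measurable_fst]
    have h2 : expLoss L (selfLabel pT f) fstar
        = ∫⁻ w, ENNReal.ofReal (L w.2.2 (fstar w.2.1)) ∂πstar := by
      rw [expLoss, ← hπ2, lintegral_map mF measurable_snd]
    rw [← h1, h2]
  -- Step E: pointwise triangle + Lipschitz bound on πstar
  have stepE : (∫⁻ w, ENNReal.ofReal (L w.2.2 (fstar w.2.1)) ∂πstar)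
      ≤ (∫⁻ w, ENNReal.ofReal (L w.1.2 w.2.2) ∂πstar)
        + (∫⁻ w, ENNReal.ofReal (L w.1.2 (fstar w.1.1)) ∂πstar)
        + ∫⁻ w, ENNReal.ofReal (k * |fstar w.1.1 - fstar w.2.1|) ∂πstar := by
    rw [← lintegral_add_left m1, ← lintegral_add_left (f := fun w : (Z × ℝ) × (Z × ℝ) => ENNReal.ofReal (L w.1.2 w.2.2) + ENNReal.ofReal (L w.1.2 (fstar w.1.1))) (m1.add m2)]
    refine lintegral_mono fun w => ?_
    have h1 : |L w.2.2 (fstar w.2.1) - L w.2.2 (fstar w.1.1)|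
        ≤ k * |fstar w.2.1 - fstar w.1.1| := hLlip _ _ _
    have h1' : L w.2.2 (fstar w.2.1) - L w.2.2 (fstar w.1.1)
        ≤ k * |fstar w.1.1 - fstar w.2.1| := by
      rw [abs_sub_comm]
      exact (le_abs_self _).trans h1
    have h2 : L w.2.2 (fstar w.1.1) ≤ L w.2.2 w.1.2 + L w.1.2 (fstar w.1.1) := hLtri _ _ _
    have h3 : L w.2.2 w.1.2 = L w.1.2 w.2.2 := hLsymm _ _
    have habs : (0:ℝ) ≤ k * |fstar w.1.1 - fstar w.2.1| :=
      mul_nonneg hk.le (abs_nonneg _)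
    rw [← ENNReal.ofReal_add (hL0 _ _) (hL0 _ _),
      ← ENNReal.ofReal_add (add_nonneg (hL0 _ _) (hL0 _ _)) habs]
    refine ENNReal.ofReal_le_ofReal ?_
    linarith
  -- Step F: first-marginal identification
  have stepF : (∫⁻ w, ENNReal.ofReal (L w.1.2 (fstar w.1.1)) ∂πstar)
      = expLoss L pSα fstar := by
    rw [expLoss, ← hπ1, lintegral_map mF measurable_fst]
  -- Step G: bound the Lipschitz term by the transport cost plus k·M·φ
  set A : Set ((Z × ℝ) × (Z × ℝ)) :=
    {w | lam * d w.1.1 w.2.1 < |fstar w.1.1 - fstar w.2.1|} with hAdef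
  have hA : MeasurableSet A := measurableSet_lt (mdraw.const_mul lam) mΔ
  have stepG : (∫⁻ w, ENNReal.ofReal (k * |fstar w.1.1 - fstar w.2.1|) ∂πstar)
      ≤ (∫⁻ w, ENNReal.ofReal (k * lam * d w.1.1 w.2.1) ∂πstar)
        + ENNReal.ofReal (k * M * φ) := by
    have hsplit := lintegral_add_compl
      (fun w => ENNReal.ofReal (k * |fstar w.1.1 - fstar w.2.1|)) hA (μ := πstar)
    rw [← hsplit]
    have hbad : (∫⁻ w in A, ENNReal.ofReal (k * |fstar w.1.1 - fstar w.2.1|) ∂πstar)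
        ≤ ENNReal.ofReal (k * M * φ) := by
      calc (∫⁻ w in A, ENNReal.ofReal (k * |fstar w.1.1 - fstar w.2.1|) ∂πstar)
          ≤ ∫⁻ _ in A, ENNReal.ofReal (k * M) ∂πstar := by
            refine lintegral_mono fun w => ENNReal.ofReal_le_ofReal ?_
            exact mul_le_mul_of_nonneg_left (hfstarM _ _) hk.le
        _ = ENNReal.ofReal (k * M) * πstar A := by rw [setLIntegral_const]
        _ ≤ ENNReal.ofReal (k * M) * ENNReal.ofReal φ := by
            exact mul_le_mul_right hptl _
        _ = ENNReal.ofReal (k * M * φ) := by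
            rw [ENNReal.ofReal_mul (mul_nonneg hk.le hM)]
    have hgood : (∫⁻ w in Aᶜ, ENNReal.ofReal (k * |fstar w.1.1 - fstar w.2.1|) ∂πstar)
        ≤ ∫⁻ w, ENNReal.ofReal (k * lam * d w.1.1 w.2.1) ∂πstar := by
      calc (∫⁻ w in Aᶜ, ENNReal.ofReal (k * |fstar w.1.1 - fstar w.2.1|) ∂πstar)
          ≤ ∫⁻ w in Aᶜ, ENNReal.ofReal (k * lam * d w.1.1 w.2.1) ∂πstar := by
            refine setLIntegral_mono md fun w hw => ENNReal.ofReal_le_ofReal ?_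
            have hw' : |fstar w.1.1 - fstar w.2.1| ≤ lam * d w.1.1 w.2.1 := not_lt.mp hw
            calc k * |fstar w.1.1 - fstar w.2.1| ≤ k * (lam * d w.1.1 w.2.1) :=
                  mul_le_mul_of_nonneg_left hw' hk.le
              _ = k * lam * d w.1.1 w.2.1 := by ring
        _ ≤ ∫⁻ w, ENNReal.ofReal (k * lam * d w.1.1 w.2.1) ∂πstar :=
            lintegral_mono' Measure.restrict_le_self le_rfl
    calc (∫⁻ w in A, _ ∂πstar) + (∫⁻ w in Aᶜ, _ ∂πstar)
        ≤ ENNReal.ofReal (k * M * φ)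
          + ∫⁻ w, ENNReal.ofReal (k * lam * d w.1.1 w.2.1) ∂πstar := add_le_add hbad hgood
      _ = _ := add_comm _ _
  -- Step H: recombine the transport-cost integrand
  have stepH : (∫⁻ w, ENNReal.ofReal (k * lam * d w.1.1 w.2.1) ∂πstar)
      + (∫⁻ w, ENNReal.ofReal (L w.1.2 w.2.2) ∂πstar)
      = ∫⁻ w, ENNReal.ofReal (k * lam * d w.1.1 w.2.1 + L w.1.2 w.2.2) ∂πstar := by
    rw [← lintegral_add_left md]
    refine lintegral_congr fun w => ?_
    rw [ENNReal.ofReal_add (mul_nonneg (mul_nonneg hk.le hlam.le) ?_) (hL0 _ _)]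
    · nlinarith [hdtri w.1.1 w.2.1 w.1.1, hdrefl w.1.1, hdsymm w.1.1 w.2.1]
  -- Combine everything
  rw [← hopt]
  calc expLoss L pT f
      ≤ expLoss L pT fstar + ∫⁻ z, ENNReal.ofReal (L (f z.1) (fstar z.1)) ∂pT := stepA
    _ = expLoss L pT fstar + ∫⁻ w, ENNReal.ofReal (L w.2.2 (fstar w.2.1)) ∂πstar := by
        rw [stepB]
    _ ≤ expLoss L pT fstar
        + ((∫⁻ w, ENNReal.ofReal (L w.1.2 w.2.2) ∂πstar)
          + expLoss L pSα fstar
          + ∫⁻ w, ENNReal.ofReal (k * |fstar w.1.1 - fstar w.2.1|) ∂πstar) := by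
        refine add_le_add_right ?_ _
        rw [← stepF]
        exact stepE
    _ ≤ expLoss L pT fstar
        + ((∫⁻ w, ENNReal.ofReal (L w.1.2 w.2.2) ∂πstar)
          + expLoss L pSα fstar
          + ((∫⁻ w, ENNReal.ofReal (k * lam * d w.1.1 w.2.1) ∂πstar)
            + ENNReal.ofReal (k * M * φ))) := by
        exact add_le_add_right (add_le_add_right stepG _) _
    _ = ((∫⁻ w, ENNReal.ofReal (k * lam * d w.1.1 w.2.1) ∂πstar)
          + (∫⁻ w, ENNReal.ofReal (L w.1.2 w.2.2) ∂πstar))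
        + (expLoss L pSα fstar + expLoss L pT fstar)
        + ENNReal.ofReal (k * M * φ) := by ring
    _ = _ := by rw [stepH]
end
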